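/- Let M ⊆ S = K[x,y] be a monomial ideal of finite colength (for a grading by coprime positive integers a, b). For every k ≥ 1 and every ℓ ≥ 1, there is at most one direct path from m_k of length ℓ. -/

import Mathlib

/-!
Combinatorial framework for monomial ideals in `K[x,y]`, graded by
`deg x = a`, `deg y = b`.  A monomial `x^α y^β` is represented by the
pair `(α, β) : ℤ × ℤ`; it lies in `S = K[x,y]` when both entries are
nonnegative.
-/

namespace MonId

/-- A (Laurent) monomial `x^α y^β`, represented by its exponent vector. -/
abbrev Mon : Type := ℤ × ℤ

/-- `p` is a genuine monomial of `S = K[x,y]` (nonnegative exponents). -/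
def inS (p : Mon) : Prop := 0 ≤ p.1 ∧ 0 ≤ p.2

/-- `M` is (the set of monomials of) a monomial ideal of `S` of finite
colength: it consists of monomials of `S`, is closed under multiplication
by `x` and by `y`, and its complement in the monomials of `S` is finite. -/
def IsMonIdeal (M : Set Mon) : Prop :=
  (∀ p ∈ M, inS p) ∧
  (∀ p ∈ M, (p.1 + 1, p.2) ∈ M ∧ (p.1, p.2 + 1) ∈ M) ∧
  {p : Mon | inS p ∧ p ∉ M}.Finite

/-- `p` is a minimal monomial generator of the monomial ideal `M`. -/
def IsMinGen (M : Set Mon) (p : Mon) : Prop :=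
  p ∈ M ∧ (p.1 - 1, p.2) ∉ M ∧ (p.1, p.2 - 1) ∉ M

/-- `m 0, m 1, …, m e` is the list of minimal generators of `M`, in
increasing lexicographic order `≺` with `x ≺ y` (equivalently, with
strictly increasing `y`-exponents). -/
def IsGenSeq (M : Set Mon) (e : ℕ) (m : ℕ → Mon) : Prop :=
  (∀ k ≤ e, IsMinGen M (m k)) ∧
  (∀ k, k < e → (m k).2 < (m (k + 1)).2) ∧
  (∀ p, IsMinGen M p → ∃ k ≤ e, m k = p)

/-- Multiplication of the monomial `p` by `r^ℓ`, where `r = x^b y^{-a}`. -/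
def rpow (a b ℓ : ℤ) (p : Mon) : Mon := (p.1 + b * ℓ, p.2 - a * ℓ)

/-- `w m i` is `w_i = lcm(m_{i-1}, m_i)` (componentwise max of exponents). -/
def w (m : ℕ → Mon) (i : ℕ) : Mon :=
  (max (m (i - 1)).1 (m i).1, max (m (i - 1)).2 (m i).2)

/-- The set `T⁺(M)` of positive significant arrows `(i, ℓ)`:
`1 ≤ i ≤ e`, `ℓ ≥ 1`, `m_i r^ℓ ∈ S ∖ M` and `w_i r^ℓ ∈ M`. -/
def Tplus (a b : ℤ) (M : Set Mon) (e : ℕ) (m : ℕ → Mon) : Set (ℕ × ℤ) :=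
  {q | 1 ≤ q.1 ∧ q.1 ≤ e ∧ 1 ≤ q.2 ∧ inS (rpow a b q.2 (m q.1)) ∧
    rpow a b q.2 (m q.1) ∉ M ∧ rpow a b q.2 (w m q.1) ∈ M}

/-- The set `T⁻(M)` of negative significant arrows `(i, ℓ)`:
`0 ≤ i ≤ e - 1`, `ℓ ≤ -1`, `m_i r^ℓ ∈ S ∖ M` and `w_{i+1} r^ℓ ∈ M`. -/
def Tminus (a b : ℤ) (M : Set Mon) (e : ℕ) (m : ℕ → Mon) : Set (ℕ × ℤ) :=
  {q | q.1 < e ∧ q.2 ≤ -1 ∧ inS (rpow a b q.2 (m q.1)) ∧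
    rpow a b q.2 (m q.1) ∉ M ∧ rpow a b q.2 (w m (q.1 + 1)) ∈ M}

/-- `j⁺(p) = max {i : m_i divides p}`. -/
def jplus (e : ℕ) (m : ℕ → Mon) (p : Mon) : ℕ :=
  Nat.findGreatest (fun i => (m i).1 ≤ p.1 ∧ (m i).2 ≤ p.2) e

/-- `j⁻(p) = min {i : m_i divides p}`. -/
noncomputable def jminus (e : ℕ) (m : ℕ → Mon) (p : Mon) : ℕ :=
  sInf {i | i ≤ e ∧ (m i).1 ≤ p.1 ∧ (m i).2 ≤ p.2}

/-- `IsPath a b M e m i P`: `P` is a path from the generator `m_i`, i.e. a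
finite sequence of positive significant arrows whose first arrow `(i₁, ℓ₁)`
has `i₁ ≤ i`, and whose tail is a path from `m_{j⁺(w_{i₁} r^{ℓ₁})}`.
The empty sequence is a path from every generator. -/
def IsPath (a b : ℤ) (M : Set Mon) (e : ℕ) (m : ℕ → Mon) : ℕ → List (ℕ × ℤ) → Prop
  | _, [] => True
  | i, q :: rest => q ∈ Tplus a b M e m ∧ q.1 ≤ i ∧
      IsPath a b M e m (jplus e m (rpow a b q.2 (w m q.1))) rest

/-- The length `l(P) = ℓ₁ + ⋯ + ℓ_s` of a path. -/
def llen (P : List (ℕ × ℤ)) : ℤ := (P.map Prod.snd).sum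

/-- `lm j` is the largest `ℓ` with `(j, ℓ) ∈ T⁺(M)`, and is `0` when no
such arrow exists. -/
def IsLmax (Tp : Set (ℕ × ℤ)) (lm : ℕ → ℤ) : Prop :=
  ∀ j : ℕ, (∀ ℓ : ℤ, (j, ℓ) ∈ Tp → ℓ ≤ lm j) ∧
    ((∃ ℓ : ℤ, (j, ℓ) ∈ Tp) → (j, lm j) ∈ Tp) ∧
    ((¬ ∃ ℓ : ℤ, (j, ℓ) ∈ Tp) → lm j = 0)

/-- `IsZSeq a b e m lm k L`: `L` is the sequence `(z_1, z_2, …)` of arrows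
produced by the greedy procedure started at index `k`: while `i ≥ 1`, if
`ℓ_i > 0` record the arrow `(i, ℓ_i)` and jump to `j⁺(w_i r^{ℓ_i})`,
otherwise decrease `i` by one; stop when `i ≤ 0`. -/
inductive IsZSeq (a b : ℤ) (e : ℕ) (m : ℕ → Mon) (lm : ℕ → ℤ) : ℕ → List (ℕ × ℤ) → Prop where
  | zero : IsZSeq a b e m lm 0 []
  | skip {i : ℕ} {L : List (ℕ × ℤ)} : 1 ≤ i → lm i ≤ 0 →
      IsZSeq a b e m lm (i - 1) L → IsZSeq a b e m lm i L
  | step {i : ℕ} {L : List (ℕ × ℤ)} : 1 ≤ i → 0 < lm i →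
      IsZSeq a b e m lm (jplus e m (rpow a b (lm i) (w m i))) L →
      IsZSeq a b e m lm i ((i, lm i) :: L)

/-- `D` is a direct path from `m_k`: a path which is either a nonempty
initial segment `(z_1, …, z_s)` of the greedy sequence from `k`, or
`(z_1, …, z_s, (i', ℓ'))` where `i'` is the index of `z_{s+1}` and
`1 ≤ ℓ' < ℓ_{i'}`. -/
def IsDirectPath (a b : ℤ) (M : Set Mon) (e : ℕ) (m : ℕ → Mon) (lm : ℕ → ℤ)
    (k : ℕ) (D : List (ℕ × ℤ)) : Prop :=
  IsPath a b M e m k D ∧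
  ∃ L, IsZSeq a b e m lm k L ∧
    ((∃ s : ℕ, 0 < s ∧ s ≤ L.length ∧ D = L.take s) ∨
     (∃ (s : ℕ) (z : ℕ × ℤ) (ℓ' : ℤ), L[s]? = some z ∧ 1 ≤ ℓ' ∧ ℓ' < z.2 ∧
       D = L.take s ++ [(z.1, ℓ')]))

/-- The monomial `c_P = c_{i₁}^{ℓ₁} ⋯ c_{i_s}^{ℓ_s}` associated to a path,
as an element of the polynomial ring with variables `c_i^ℓ` (indexed by
pairs `(i, ℓ)`). -/
noncomputable def cP (K : Type*) [CommSemiring K] (P : List (ℕ × ℤ)) : MvPolynomial (ℕ × ℤ) K :=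
  (P.map MvPolynomial.X).prod

end MonId

open MonId

namespace MonId

/-- The greedy sequence is deterministic. -/
lemma zseq_unique {a b : ℤ} {e : ℕ} {m : ℕ → Mon} {lm : ℕ → ℤ} :
    ∀ {i : ℕ} {L L' : List (ℕ × ℤ)}, IsZSeq a b e m lm i L →
      IsZSeq a b e m lm i L' → L = L' := by
  intro i L L' h
  induction h generalizing L' with
  | zero =>
    intro h'
    cases h' with
    | zero => rfl
    | skip h1 _ _ => omega
    | step h1 _ _ => omega
  | skip h1 h2 _ ih =>
    intro h'
    cases h' with
    | zero => omega
    | skip _ _ h3 => exact ih h3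
    | step _ h2' _ => omega
  | step h1 h2 _ ih =>
    intro h'
    cases h' with
    | zero => omega
    | skip _ h2' _ => omega
    | step _ _ h3 => rw [ih h3]

/-- All arrows in a greedy sequence have positive exponent. -/
lemma zseq_pos {a b : ℤ} {e : ℕ} {m : ℕ → Mon} {lm : ℕ → ℤ} {i : ℕ}
    {L : List (ℕ × ℤ)} (h : IsZSeq a b e m lm i L) :
    ∀ q ∈ L, (0 : ℤ) < q.2 := by
  induction h with
  | zero => simp
  | skip _ _ _ ih => exact ih
  | step h1 h2 _ ih =>
    intro q hq
    rcases List.mem_cons.1 hq with rfl | hq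
    · exact h2
    · exact ih q hq

lemma llen_append (A B : List (ℕ × ℤ)) : llen (A ++ B) = llen A + llen B := by
  simp [llen]

lemma llen_take_succ (L : List (ℕ × ℤ)) (s : ℕ) (z : ℕ × ℤ)
    (hz : L[s]? = some z) :
    llen (L.take (s + 1)) = llen (L.take s) + z.2 := by
  have hz' : L[s]? = some z := hz
  rw [List.take_succ, hz', llen_append]
  simp [llen]

lemma llen_take_lt (L : List (ℕ × ℤ)) (hpos : ∀ q ∈ L, (0 : ℤ) < q.2)
    {s t : ℕ} (hst : s < t) (ht : t ≤ L.length) :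
    llen (L.take s) < llen (L.take t) := by
  induction t with
  | zero => omega
  | succ t ih =>
    have htl : t < L.length := by omega
    obtain ⟨z, hz⟩ : ∃ z, L[t]? = some z :=
      ⟨L[t], List.getElem?_eq_getElem htl⟩
    have hzpos := hpos z (List.mem_of_getElem? hz)
    rw [llen_take_succ L t z hz]
    rcases lt_or_eq_of_le (Nat.lt_succ_iff.mp hst) with h | h
    · have := ih h (le_of_lt htl)
      linarith
    · subst h; linarith

lemma llen_take_le (L : List (ℕ × ℤ)) (hpos : ∀ q ∈ L, (0 : ℤ) < q.2)
    {s t : ℕ} (hst : s ≤ t) (ht : t ≤ L.length) :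
    llen (L.take s) ≤ llen (L.take t) := by
  rcases lt_or_eq_of_le hst with h | h
  · exact le_of_lt (llen_take_lt L hpos h ht)
  · subst h; exact le_refl _

lemma llen_single (q : ℕ × ℤ) : llen [q] = q.2 := by simp [llen]

end MonId

/-- Remark `rem:PropertiesOfDirectPaths` (1).  For a
monomial ideal `M ⊆ K[x,y]` of finite colength, graded by coprime positive
integers `a, b`, and any minimal generator `m_k` with `k ≥ 1`, there is at
most one direct path from `m_k` of a given length `ℓ ≥ 1`. -/
theorem directPath_unique
    (a b : ℤ) (ha : 1 ≤ a) (hb : 1 ≤ b) (hab : IsCoprime a b)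
    (M : Set Mon) (hM : IsMonIdeal M) (e : ℕ) (m : ℕ → Mon)
    (hg : IsGenSeq M e m)
    (lm : ℕ → ℤ) (hlm : IsLmax (Tplus a b M e m) lm)
    (k : ℕ) (hk1 : 1 ≤ k) (hke : k ≤ e) (ℓ : ℤ) (hℓ : 1 ≤ ℓ)
    (P P' : List (ℕ × ℤ))
    (hP : IsDirectPath a b M e m lm k P) (hPl : llen P = ℓ)
    (hP' : IsDirectPath a b M e m lm k P') (hP'l : llen P' = ℓ) :
    P = P' := by
  obtain ⟨-, L, hL, hc⟩ := hP
  obtain ⟨-, L', hL', hc'⟩ := hP'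
  obtain rfl : L = L' := zseq_unique hL hL'
  have hpos := zseq_pos hL
  have heq : llen P = llen P' := by rw [hPl, hP'l]
  -- a "take" can never have the same length as a "take plus partial arrow"
  have key : ∀ (s t : ℕ) (z : ℕ × ℤ) (ℓ' : ℤ), s ≤ L.length → L[t]? = some z →
      1 ≤ ℓ' → ℓ' < z.2 → llen (L.take s) ≠ llen (L.take t) + ℓ' := by
    intro s t z ℓ' hs hz h1 h2
    obtain ⟨htlen, -⟩ := List.getElem?_eq_some_iff.mp hz
    have hsucc := llen_take_succ L t z hz
    rcases le_or_gt s t with h | h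
    · have := llen_take_le L hpos h (le_of_lt htlen)
      intro hE; linarith
    · have := llen_take_le L hpos (Nat.succ_le_of_lt h) hs
      intro hE; linarith
  rcases hc with ⟨s, hs0, hslen, rfl⟩ | ⟨s, z, ℓ₁, hz, hl1, hl2, rfl⟩ <;>
    rcases hc' with ⟨t, ht0, htlen, rfl⟩ | ⟨t, z', ℓ₂, hz', hl1', hl2', rfl⟩
  · -- both initial segments
    obtain rfl : s = t := by
      by_contra hne
      rcases Nat.lt_or_ge s t with h | h
      · exact absurd heq (ne_of_lt (llen_take_lt L hpos h htlen))
      · have h' : t < s := lt_of_le_of_ne h (fun hts => hne hts.symm)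
        exact absurd heq.symm (ne_of_lt (llen_take_lt L hpos h' hslen))
    rfl
  · -- take vs take + partial arrow
    rw [llen_append, llen_single] at heq
    exact absurd heq (key s t z' ℓ₂ hslen hz' hl1' hl2')
  · -- take + partial arrow vs take
    rw [llen_append, llen_single] at heq
    exact absurd heq.symm (key t s z ℓ₁ htlen hz hl1 hl2)
  · -- both take + partial arrow
    rw [llen_append, llen_single, llen_append, llen_single] at heq
    obtain ⟨hslen, -⟩ := List.getElem?_eq_some_iff.mp hz
    obtain ⟨htlen, -⟩ := List.getElem?_eq_some_iff.mp hz'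
    have hzpos : (0:ℤ) < z.2 := hpos z (List.mem_of_getElem? hz)
    have hz'pos : (0:ℤ) < z'.2 := hpos z' (List.mem_of_getElem? hz')
    obtain rfl : s = t := by
      by_contra hne
      rcases Nat.lt_or_ge s t with h | h
      · have hsucc := llen_take_succ L s z hz
        have hle := llen_take_le L hpos (Nat.succ_le_of_lt h) (le_of_lt htlen)
        linarith
      · have h' : t < s := lt_of_le_of_ne h (fun hts => hne hts.symm)
        have hsucc := llen_take_succ L t z' hz'
        have hle := llen_take_le L hpos (Nat.succ_le_of_lt h') (le_of_lt hslen)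
        linarith
    obtain rfl : z = z' := by rw [hz] at hz'; exact Option.some.inj hz'
    obtain rfl : ℓ₁ = ℓ₂ := by linarith
    rfl
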